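/- Let a ≥ 1, b > a, β > 0, and ψ(p) = (b − p)^{−β} for p near b. Then as δ → 0+, the fundamental function φ(δ) = sup_{p ∈ (a,b)} δ^{1/p} (b−p)^{β} satisfies φ(δ) ∼ (β b²/e)^{β} · δ^{1/b} · |log δ|^{−β}. -/

import Mathlib

open Filter

set_option maxHeartbeats 1000000 in
/-- asymptotics of the fundamental function
`φ(δ) = sup_{p ∈ (a,b)} δ^{1/p}(b−p)^β ∼ (βb²/e)^β δ^{1/b} |log δ|^{−β}`
as `δ → 0⁺`. -/
theorem fundamental_function_asymptotics_finite_b (a b β : ℝ)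
    (ha : 1 ≤ a) (hab : a < b) (hβ : 0 < β) :
    Tendsto (fun δ : ℝ =>
        (⨆ p : Set.Ioo a b, δ ^ (1 / (p : ℝ)) * (b - (p : ℝ)) ^ β) /
          ((β * b ^ 2 / Real.exp 1) ^ β * δ ^ (1 / b) * |Real.log δ| ^ (-β)))
      (nhdsWithin 0 (Set.Ioo 0 1)) (nhds 1) := by
  have ha0 : (0:ℝ) < a := lt_of_lt_of_le one_pos ha
  have hb0 : (0:ℝ) < b := ha0.trans hab
  have hba : 0 < b - a := sub_pos.mpr hab
  set c : ℝ := β * b ^ 2 with hc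
  have hc0 : 0 < c := by positivity
  set F := nhdsWithin (0:ℝ) (Set.Ioo 0 1) with hF
  have hLtop : Tendsto (fun δ : ℝ => -Real.log δ) F atTop := by
    have h1 : Tendsto Real.log F atBot :=
      Real.tendsto_log_nhdsGT_zero.mono_left
        (nhdsWithin_mono 0 Set.Ioo_subset_Ioi_self)
    exact tendsto_neg_atTop_iff.mpr h1
  set q : ℝ → ℝ := fun δ => b - c / (-Real.log δ) with hqdef
  have hqb : Tendsto q F (nhds b) := by
    have h0 : Tendsto (fun δ => c / (-Real.log δ)) F (nhds 0) :=
      Tendsto.div_atTop tendsto_const_nhds hLtop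
    simpa using tendsto_const_nhds.sub h0
  have hlo : Tendsto (fun δ => Real.exp (β - β * b / q δ)) F (nhds 1) := by
    have h1 : Tendsto (fun δ => β - β * b / q δ) F (nhds 0) := by
      have h2 : Tendsto (fun δ => β * b / q δ) F (nhds (β * b / b)) :=
        tendsto_const_nhds.div hqb (ne_of_gt hb0)
      have h3 : β * b / b = β := by field_simp
      rw [h3] at h2
      have h4 : Tendsto (fun _ : ℝ => β) F (nhds β) := tendsto_const_nhds
      simpa using h4.sub h2
    have := (Real.continuous_exp.tendsto 0).comp h1
    simpa [Function.comp_def] using this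
  have hEe : Tendsto (fun δ => Real.exp (c / (q δ) ^ 2 - β)) F (nhds 1) := by
    have h1 : Tendsto (fun δ => c / (q δ) ^ 2 - β) F (nhds 0) := by
      have h2 : Tendsto (fun δ => c / (q δ) ^ 2) F (nhds (c / b ^ 2)) :=
        tendsto_const_nhds.div (hqb.pow 2) (by positivity)
      have h3 : c / b ^ 2 = β := by rw [hc]; field_simp
      rw [h3] at h2
      have h4 : Tendsto (fun _ : ℝ => β) F (nhds β) := tendsto_const_nhds
      simpa using h2.sub h4
    have := (Real.continuous_exp.tendsto 0).comp h1
    simpa [Function.comp_def] using this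
  have hhi : Tendsto (fun δ => Real.exp (β - β * b / q δ) * Real.exp (c / (q δ) ^ 2 - β))
      F (nhds 1) := by simpa using hlo.mul hEe
  have key : ∀ᶠ δ in F,
      Real.exp (β - β * b / q δ) ≤
        (⨆ p : Set.Ioo a b, δ ^ (1 / (p : ℝ)) * (b - (p : ℝ)) ^ β) /
          ((β * b ^ 2 / Real.exp 1) ^ β * δ ^ (1 / b) * |Real.log δ| ^ (-β)) ∧
      (⨆ p : Set.Ioo a b, δ ^ (1 / (p : ℝ)) * (b - (p : ℝ)) ^ β) /
          ((β * b ^ 2 / Real.exp 1) ^ β * δ ^ (1 / b) * |Real.log δ| ^ (-β)) ≤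
        Real.exp (β - β * b / q δ) * Real.exp (c / (q δ) ^ 2 - β) := by
    have h2 : ∀ᶠ δ in F, 2 * c / (b - a) < -Real.log δ := hLtop.eventually_gt_atTop _
    filter_upwards [eventually_mem_nhdsWithin, h2] with δ hδ hl2
    obtain ⟨hδ0, hδ1⟩ := hδ
    set l : ℝ := -Real.log δ with hldef
    have hlog : Real.log δ < 0 := Real.log_neg hδ0 hδ1
    have hl0 : 0 < l := by rw [hldef]; linarith
    have habs : |Real.log δ| = l := abs_of_neg hlog
    have hcl : 0 < c / l := div_pos hc0 hl0
    have hqlt : q δ < b := by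
      show b - c / l < b
      linarith
    have hag : a < q δ := by
      have h4 : c / l < b - a := by
        rw [div_lt_iff₀ hl0]
        rw [div_lt_iff₀ hba] at hl2
        nlinarith
      show a < b - c / l
      linarith
    have hq0 : 0 < q δ := ha0.trans hag
    have hbq : b - q δ = c / l := by
      show b - (b - c / l) = c / l
      ring
    have hbq0 : 0 < b - q δ := by rw [hbq]; exact hcl
    have hCL : c = l * (b - q δ) := by
      rw [hbq]; field_simp
    have hlogδ : Real.log δ = -l := by rw [hldef]; ring
    -- the identity: value at q equals lo * T
    have lemA : δ ^ (1 / q δ) * (b - q δ) ^ β =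
        Real.exp (β - β * b / q δ) *
          ((β * b ^ 2 / Real.exp 1) ^ β * δ ^ (1 / b) * |Real.log δ| ^ (-β)) := by
      rw [habs, ← hc,
          Real.rpow_def_of_pos hδ0 (1 / q δ), Real.rpow_def_of_pos hbq0,
          Real.rpow_def_of_pos (div_pos hc0 (Real.exp_pos 1)),
          Real.rpow_def_of_pos hδ0 (1 / b), Real.rpow_def_of_pos hl0,
          ← Real.exp_add, ← Real.exp_add, ← Real.exp_add, ← Real.exp_add]
      congr 1
      have h1 : Real.log (b - q δ) = Real.log c - Real.log l := by
        rw [hbq, Real.log_div (ne_of_gt hc0) (ne_of_gt hl0)]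
      have h2 : Real.log (c / Real.exp 1) = Real.log c - 1 := by
        rw [Real.log_div (ne_of_gt hc0) (ne_of_gt (Real.exp_pos 1)), Real.log_exp]
      rw [h1, h2, hlogδ]
      have h5 : -l * (1 / q δ) = -(β * b / q δ) + -l * (1 / b) := by
        have hq' : q δ ≠ 0 := ne_of_gt hq0
        have hb' : b ≠ 0 := ne_of_gt hb0
        have hl' : l ≠ 0 := ne_of_gt hl0
        field_simp
        nlinarith [hCL]
      linear_combination h5
    -- pointwise upper bound
    have lemB : ∀ p : Set.Ioo a b, δ ^ (1 / (p : ℝ)) * (b - (p : ℝ)) ^ β ≤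
        Real.exp (c / (q δ) ^ 2 - β) * (δ ^ (1 / q δ) * (b - q δ) ^ β) := by
      rintro ⟨p, hpa, hpb⟩
      dsimp only
      have hp0 : 0 < p := ha0.trans hpa
      have hbp : 0 < b - p := sub_pos.mpr hpb
      rw [Real.rpow_def_of_pos hδ0 (1 / p), Real.rpow_def_of_pos hbp,
          Real.rpow_def_of_pos hδ0 (1 / q δ), Real.rpow_def_of_pos hbq0,
          ← Real.exp_add, ← Real.exp_add, ← Real.exp_add, Real.exp_le_exp, hlogδ]
      -- goal : -l * (1/p) + log(b-p)*β ≤ c/q² - β + (-l*(1/q) + log(b-q)*β)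
      have keylog : Real.log (b - p) - Real.log (b - q δ) ≤ (q δ - p) / (b - q δ) := by
        have h := Real.log_le_sub_one_of_pos (show 0 < (b - p) / (b - q δ) by positivity)
        rw [Real.log_div (ne_of_gt hbp) (ne_of_gt hbq0)] at h
        have h' : (b - p) / (b - q δ) - 1 = (q δ - p) / (b - q δ) := by
          field_simp
          ring
        linarith
      have hfrac : β * ((q δ - p) / (b - q δ)) = l * (q δ - p) / b ^ 2 := by
        rw [hbq, hc]
        field_simp
      have hmul : β * (Real.log (b - p) - Real.log (b - q δ)) ≤ l * (q δ - p) / b ^ 2 := by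
        rw [← hfrac]
        exact mul_le_mul_of_nonneg_left keylog hβ.le
      -- main arithmetic: l*(q-p)/b² - l/p + l/q ≤ c/q² - β
      have harith : l * (q δ - p) / b ^ 2 + (-l * (1 / p)) + l * (1 / q δ) ≤
          c / (q δ) ^ 2 - β := by
        have hid : l * (q δ - p) / b ^ 2 + (-l * (1 / p)) + l * (1 / q δ) =
            l * (p - q δ) * (1 / (p * q δ) - 1 / b ^ 2) := by
          field_simp
          ring
        have hβeq : β = l * (b - q δ) / b ^ 2 := by
          rw [← hCL, hc]; field_simp
        have hrhs : c / (q δ) ^ 2 - β = l * (b - q δ) * (1 / (q δ) ^ 2 - 1 / b ^ 2) := by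
          rw [hCL, hβeq]
          field_simp
        rw [hid, hrhs]
        rcases le_or_gt p (q δ) with hcase | hcase
        · have h6 : l * (p - q δ) * (1 / (p * q δ) - 1 / b ^ 2) ≤ 0 := by
            apply mul_nonpos_of_nonpos_of_nonneg
            · apply mul_nonpos_of_nonneg_of_nonpos hl0.le
              linarith
            · have : p * q δ ≤ b ^ 2 := by nlinarith
              have h7 : 1 / b ^ 2 ≤ 1 / (p * q δ) :=
                one_div_le_one_div_of_le (by positivity) this
              linarith
          have h8 : 0 ≤ l * (b - q δ) * (1 / (q δ) ^ 2 - 1 / b ^ 2) := by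
            apply mul_nonneg (by positivity)
            have : (q δ) ^ 2 ≤ b ^ 2 := by nlinarith
            have h7 : 1 / b ^ 2 ≤ 1 / (q δ) ^ 2 :=
              one_div_le_one_div_of_le (by positivity) this
            linarith
          linarith
        · have h9 : 1 / (p * q δ) - 1 / b ^ 2 ≤ 1 / (q δ) ^ 2 - 1 / b ^ 2 := by
            have : q δ ^ 2 ≤ p * q δ := by nlinarith
            have h7 : 1 / (p * q δ) ≤ 1 / (q δ) ^ 2 :=
              one_div_le_one_div_of_le (by positivity) this
            linarith
          have h10 : 0 ≤ 1 / (p * q δ) - 1 / b ^ 2 := by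
            have : p * q δ ≤ b ^ 2 := by nlinarith
            have h7 : 1 / b ^ 2 ≤ 1 / (p * q δ) :=
              one_div_le_one_div_of_le (by positivity) this
            linarith
          apply mul_le_mul
          · exact mul_le_mul_of_nonneg_left (by linarith) hl0.le
          · exact h9
          · exact h10
          · positivity
      linarith [hmul, harith]
    -- assemble
    haveI hne : Nonempty (Set.Ioo a b) := ⟨⟨q δ, hag, hqlt⟩⟩
    have hT0 : 0 < (β * b ^ 2 / Real.exp 1) ^ β * δ ^ (1 / b) * |Real.log δ| ^ (-β) := by
      rw [habs]
      have h1 : (0:ℝ) < β * b ^ 2 / Real.exp 1 := by positivity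
      have := Real.rpow_pos_of_pos h1 β
      have := Real.rpow_pos_of_pos hδ0 (1 / b)
      have := Real.rpow_pos_of_pos hl0 (-β)
      positivity
    have hbdd : BddAbove (Set.range fun p : Set.Ioo a b =>
        δ ^ (1 / (p : ℝ)) * (b - (p : ℝ)) ^ β) := by
      refine ⟨Real.exp (c / (q δ) ^ 2 - β) * (δ ^ (1 / q δ) * (b - q δ) ^ β), ?_⟩
      rintro x ⟨p, rfl⟩
      exact lemB p
    have hS_ge : δ ^ (1 / q δ) * (b - q δ) ^ β ≤
        ⨆ p : Set.Ioo a b, δ ^ (1 / (p : ℝ)) * (b - (p : ℝ)) ^ β := by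
      have := le_ciSup hbdd (⟨q δ, hag, hqlt⟩ : Set.Ioo a b)
      simpa using this
    have hS_le : (⨆ p : Set.Ioo a b, δ ^ (1 / (p : ℝ)) * (b - (p : ℝ)) ^ β) ≤
        Real.exp (c / (q δ) ^ 2 - β) * (δ ^ (1 / q δ) * (b - q δ) ^ β) :=
      ciSup_le fun p => lemB p
    constructor
    · rw [le_div_iff₀ hT0]
      calc Real.exp (β - β * b / q δ) *
            ((β * b ^ 2 / Real.exp 1) ^ β * δ ^ (1 / b) * |Real.log δ| ^ (-β))
          = δ ^ (1 / q δ) * (b - q δ) ^ β := lemA.symm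
        _ ≤ _ := hS_ge
    · rw [div_le_iff₀ hT0]
      calc (⨆ p : Set.Ioo a b, δ ^ (1 / (p : ℝ)) * (b - (p : ℝ)) ^ β)
          ≤ Real.exp (c / (q δ) ^ 2 - β) * (δ ^ (1 / q δ) * (b - q δ) ^ β) := hS_le
        _ = Real.exp (β - β * b / q δ) * Real.exp (c / (q δ) ^ 2 - β) *
            ((β * b ^ 2 / Real.exp 1) ^ β * δ ^ (1 / b) * |Real.log δ| ^ (-β)) := by
            rw [lemA]; ring
  exact tendsto_of_tendsto_of_tendsto_of_le_of_le' hlo hhi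
    (key.mono fun δ h => h.1) (key.mono fun δ h => h.2)
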